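/- Let q ≥ 3 be a prime power and m ≥ 4 an integer. Set θ = q^(m-1) - 1 - (Σ_{t=1}^{q-2} q^(⌈mt/(q-1)⌉-1) - q + 2)/(q-1). Equivalently θ = (q^m - Σ_{t=1}^{q-1} q^(⌈mt/(q-1)⌉-1) - 1)/(q-1). Then θ is a q-cyclotomic coset leader modulo n = (q^m - 1)/(q-1). -/

import Mathlib

open Finset

def ex (q m t : ℕ) : ℕ := (m * t + q - 2) / (q - 1) - 1

lemma add_div_le' (a b n : ℕ) : a / n + b / n ≤ (a + b) / n := by
  rcases Nat.eq_zero_or_pos n with h | h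
  · simp [h]
  · rw [Nat.le_div_iff_mul_le h, Nat.add_mul]
    exact Nat.add_le_add (Nat.div_mul_le_self a n) (Nat.div_mul_le_self b n)

lemma ex_lt (q m : ℕ) (hq3 : 3 ≤ q) (hm : 4 ≤ m) : ∀ t ∈ Finset.Icc 1 (q-1), ex q m t < m := by
  intro t ht
  simp only [Finset.mem_Icc] at ht
  have h0 : m * t ≤ m * (q-1) := Nat.mul_le_mul_left m ht.2
  have e1 : (q-1)*(m+1) = m*(q-1) + (q-1) := by ring
  have h1 : m * t + q - 2 < (q - 1) * (m + 1) := by omega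
  have h2 : (m*t + q - 2)/(q-1) < m + 1 := (Nat.div_lt_iff_lt_mul (by omega)).mpr (by
    calc m*t + q - 2 < (q-1)*(m+1) := h1
    _ = (m+1)*(q-1) := by ring)
  unfold ex; omega

lemma countLe (q m s : ℕ) (hq3 : 3 ≤ q) (hm : 4 ≤ m) (hs : s < m) :
    ((Finset.Icc 1 (q-1)).filter (fun t => ex q m t ≤ s)).card = (q-1)*(s+1)/m := by
  have hm0 : 0 < m := by omega
  have hvk : (q-1)*(s+1)/m ≤ q - 1 := by
    have h1 : (q-1)*(s+1) ≤ (q-1)*m := Nat.mul_le_mul_left _ (by omega)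
    have h2 := Nat.div_le_div_right (c := m) h1
    rwa [Nat.mul_div_cancel _ hm0] at h2
  have key : ∀ t, 1 ≤ t → (ex q m t ≤ s ↔ t ≤ (q-1)*(s+1)/m) := by
    intro t ht
    unfold ex
    rw [Nat.le_div_iff_mul_le hm0]
    have h1 : (m*t + q - 2)/(q-1) - 1 ≤ s ↔ (m*t + q-2)/(q-1) < s + 2 := by omega
    rw [h1, Nat.div_lt_iff_lt_mul (by omega)]
    have e1 : (s+2)*(q-1) = (q-1)*(s+1) + (q-1) := by ring
    have e2 : t*m = m*t := by ring
    omega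
  have hset : (Finset.Icc 1 (q-1)).filter (fun t => ex q m t ≤ s) = Finset.Icc 1 ((q-1)*(s+1)/m) := by
    ext t
    simp only [Finset.mem_filter, Finset.mem_Icc]
    constructor
    · rintro ⟨⟨h1, h2⟩, h3⟩; exact ⟨h1, (key t h1).1 h3⟩
    · rintro ⟨h1, h2⟩; exact ⟨⟨h1, le_trans h2 hvk⟩, (key t h1).2 h2⟩
  rw [hset, Nat.card_Icc, Nat.add_sub_cancel]

lemma countGe (q m r : ℕ) (hq3 : 3 ≤ q) (hm : 4 ≤ m) (hr1 : 1 ≤ r) (hrm : r ≤ m) :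
    ((Finset.Icc 1 (q-1)).filter (fun t => r ≤ ex q m t)).card = (q-1) - (q-1)*r/m := by
  have h1 := countLe q m (r-1) hq3 hm (by omega)
  have h2 := Finset.card_filter_add_card_filter_not (s := Finset.Icc 1 (q-1))
    (p := fun t => ex q m t ≤ r - 1)
  have h3 : (Finset.Icc 1 (q-1)).filter (fun t => ¬ (ex q m t ≤ r - 1))
      = (Finset.Icc 1 (q-1)).filter (fun t => r ≤ ex q m t) := by
    apply Finset.filter_congr
    intro t _
    simp only [eq_iff_iff, not_le]
    omega
  rw [h3] at h2
  have h4 : r - 1 + 1 = r := by omega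
  rw [h4] at h1
  rw [Nat.card_Icc] at h2
  omega

lemma div_le_self' (q m a : ℕ) (hm0 : 0 < m) (ha : a ≤ m) : (q-1)*a/m ≤ q-1 := by
  have h1 : (q-1)*a ≤ (q-1)*m := Nat.mul_le_mul_left _ ha
  have h2 := Nat.div_le_div_right (c := m) h1
  rwa [Nat.mul_div_cancel _ hm0] at h2

lemma countRot (q m j r : ℕ) (hq3 : 3 ≤ q) (hm : 4 ≤ m) (hj : j < m) (hr1 : 1 ≤ r)
    (hrm : r ≤ m) :
    ((Finset.Icc 1 (q-1)).filter (fun t => r ≤ (ex q m t + j) % m)).card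
      ≤ (q-1) - (q-1)*r/m := by
  have hm0 : 0 < m := by omega
  have hexlt := ex_lt q m hq3 hm
  have hrk := div_le_self' q m r hm0 hrm
  rcases le_or_gt r j with hcase | hcase
  · -- r ≤ j, so j ≥ 1
    have hsub : (Finset.Icc 1 (q-1)).filter (fun t => r ≤ (ex q m t + j) % m)
        ⊆ ((Finset.Icc 1 (q-1)).filter (fun t => ex q m t ≤ m-1-j))
          ∪ ((Finset.Icc 1 (q-1)).filter (fun t => m+r-j ≤ ex q m t)) := by
      intro t ht
      simp only [Finset.mem_filter, Finset.mem_union] at *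
      obtain ⟨ht1, ht2⟩ := ht
      have hlt := hexlt t ht1
      rcases lt_or_ge (ex q m t + j) m with h | h
      · left
        rw [Nat.mod_eq_of_lt h] at ht2
        exact ⟨ht1, by omega⟩
      · right
        have hmod : (ex q m t + j) % m = ex q m t + j - m := by
          rw [Nat.mod_eq_sub_mod h, Nat.mod_eq_of_lt (by omega)]
        rw [hmod] at ht2
        exact ⟨ht1, by omega⟩
    have hA := countLe q m (m-1-j) hq3 hm (by omega)
    have hB := countGe q m (m+r-j) hq3 hm (by omega) (by omega)
    have e1 : m-1-j+1 = m-j := by omega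
    rw [e1] at hA
    have hcard := le_trans (Finset.card_le_card hsub) (Finset.card_union_le _ _)
    rw [hA, hB] at hcard
    have hsup : (q-1)*(m-j)/m + (q-1)*r/m ≤ (q-1)*(m+r-j)/m := by
      have h := add_div_le' ((q-1)*(m-j)) ((q-1)*r) m
      have heq : (q-1)*(m-j) + (q-1)*r = (q-1)*(m+r-j) := by
        rw [← Nat.mul_add]
        congr 1
        omega
      rw [heq] at h
      exact h
    have hle2 := div_le_self' q m (m+r-j) hm0 (by omega)
    omega
  · -- j < r
    have hsub : (Finset.Icc 1 (q-1)).filter (fun t => r ≤ (ex q m t + j) % m)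
        ⊆ ((Finset.Icc 1 (q-1)).filter (fun t => ex q m t ≤ m-1-j))
          \ ((Finset.Icc 1 (q-1)).filter (fun t => ex q m t ≤ r-j-1)) := by
      intro t ht
      simp only [Finset.mem_filter, Finset.mem_sdiff, not_and, not_le] at *
      obtain ⟨ht1, ht2⟩ := ht
      have hlt := hexlt t ht1
      rcases lt_or_ge (ex q m t + j) m with h | h
      · rw [Nat.mod_eq_of_lt h] at ht2
        exact ⟨⟨ht1, by omega⟩, fun _ => by omega⟩
      · have hmod : (ex q m t + j) % m = ex q m t + j - m := by
          rw [Nat.mod_eq_sub_mod h, Nat.mod_eq_of_lt (by omega)]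
        rw [hmod] at ht2
        omega
    have hA := countLe q m (m-1-j) hq3 hm (by omega)
    have hB := countLe q m (r-j-1) hq3 hm (by omega)
    have e1 : m-1-j+1 = m-j := by omega
    have e2 : r-j-1+1 = r-j := by omega
    rw [e1] at hA
    rw [e2] at hB
    have hBsubA : ((Finset.Icc 1 (q-1)).filter (fun t => ex q m t ≤ r-j-1))
        ⊆ ((Finset.Icc 1 (q-1)).filter (fun t => ex q m t ≤ m-1-j)) := by
      exact Finset.monotone_filter_right _ (fun t ht => by omega)
    have hcard := le_trans (Finset.card_le_card hsub) (le_of_eq (Finset.card_sdiff_of_subset hBsubA))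
    rw [hA, hB] at hcard
    have hsup : (q-1)*(m-j)/m + (q-1)*r/m ≤ (q-1)*(r-j)/m + (q-1) := by
      have h := add_div_le' ((q-1)*(m-j)) ((q-1)*r) m
      have heq : (q-1)*(m-j) + (q-1)*r = (q-1)*(r-j) + (q-1)*m := by
        rw [← Nat.mul_add, ← Nat.mul_add]
        congr 1
        omega
      rw [heq, Nat.add_mul_div_right _ _ hm0] at h
      exact h
    omega

lemma geom_nat (q : ℕ) (hq : 1 ≤ q) : ∀ e : ℕ, 1 + (q-1) * ∑ i ∈ Finset.range e, q^i = q^e := by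
  intro e
  induction e with
  | zero => simp
  | succ n ih =>
    rw [Finset.sum_range_succ, Nat.mul_add, ← Nat.add_assoc, ih, pow_succ]
    have h : (q-1) * q^n = q^n * q - q^n := by
      rw [Nat.sub_mul, one_mul, mul_comm]
    have hle : q^n ≤ q^n * q := Nat.le_mul_of_pos_right _ (by omega)
    omega

lemma pow_expand (q m e : ℕ) (hq : 1 ≤ q) (he : e ≤ m) :
    q ^ e = 1 + (q-1) * ∑ i ∈ Finset.range m, (if i < e then q^i else 0) := by
  have h1 : ∑ i ∈ Finset.range m, (if i < e then q^i else 0)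
      = ∑ i ∈ (Finset.range m).filter (fun i => i < e), q^i := (Finset.sum_filter _ _).symm
  have h2 : (Finset.range m).filter (fun i => i < e) = Finset.range e := by
    ext i
    simp only [Finset.mem_filter, Finset.mem_range]
    omega
  rw [h1, h2, geom_nat q hq]

lemma sum_pow_le (q m : ℕ) (hq : 1 ≤ q) (s : Finset ℕ) (a b : ℕ → ℕ)
    (ha : ∀ t ∈ s, a t < m) (hb : ∀ t ∈ s, b t < m)
    (h : ∀ i, i < m → (s.filter (fun t => i < b t)).card ≤ (s.filter (fun t => i < a t)).card) :
    ∑ t ∈ s, q ^ b t ≤ ∑ t ∈ s, q ^ a t := by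
  have expand : ∀ (f : ℕ → ℕ), (∀ t ∈ s, f t < m) →
      ∑ t ∈ s, q ^ f t
        = s.card + (q-1) * ∑ i ∈ Finset.range m, q^i * (s.filter (fun t => i < f t)).card := by
    intro f hf
    have e1 : ∀ t ∈ s, q ^ f t = 1 + (q-1) * ∑ i ∈ Finset.range m, (if i < f t then q^i else 0) :=
      fun t ht => pow_expand q m (f t) hq (le_of_lt (hf t ht))
    rw [Finset.sum_congr rfl e1, Finset.sum_add_distrib, Finset.sum_const, smul_eq_mul,
      mul_one, ← Finset.mul_sum, Finset.sum_comm]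
    congr 2
    apply Finset.sum_congr rfl
    intro i _
    rw [← Finset.sum_filter, Finset.sum_const, smul_eq_mul, mul_comm]
  rw [expand a ha, expand b hb]
  apply Nat.add_le_add_left
  apply Nat.mul_le_mul_left
  apply Finset.sum_le_sum
  intro i hi
  exact Nat.mul_le_mul_left _ (h i (Finset.mem_range.mp hi))

lemma sum_modEq (n : ℕ) (s : Finset ℕ) (f g : ℕ → ℕ) (h : ∀ t ∈ s, f t ≡ g t [MOD n]) :
    (∑ t ∈ s, f t) ≡ (∑ t ∈ s, g t) [MOD n] := by
  induction s using Finset.cons_induction with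
  | empty => rfl
  | cons x s hx ih =>
    rw [Finset.sum_cons, Finset.sum_cons]
    exact Nat.ModEq.add (h x (Finset.mem_cons_self x s)) (ih (fun t ht => h t (Finset.mem_cons_of_mem ht)))

lemma pow_mod_cycle (q m a : ℕ) (hq : 1 ≤ q) (hm : 1 ≤ m) :
    q ^ a ≡ q ^ (a % m) [MOD q^m - 1] := by
  conv_lhs => rw [← Nat.div_add_mod a m]
  rw [pow_add, pow_mul]
  have h1 : q ^ m ≡ 1 [MOD q^m - 1] :=
    ((Nat.modEq_iff_dvd' (Nat.one_le_pow _ _ (by omega))).mpr dvd_rfl).symm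
  calc (q^m)^(a/m) * q^(a%m) ≡ 1^(a/m) * q^(a%m) [MOD q^m - 1] :=
        Nat.ModEq.mul (Nat.ModEq.pow _ h1) (Nat.ModEq.refl _)
    _ = q^(a%m) := by rw [one_pow, one_mul]

lemma T_le_S (q m j : ℕ) (hq3 : 3 ≤ q) (hm : 4 ≤ m) (hj : j < m) :
    ∑ t ∈ Finset.Icc 1 (q-1), q^((ex q m t + j) % m) ≤ ∑ t ∈ Finset.Icc 1 (q-1), q^(ex q m t) := by
  have hm0 : 0 < m := by omega
  apply sum_pow_le q m (by omega) _ _ _ (ex_lt q m hq3 hm)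
    (fun t _ => Nat.mod_lt _ hm0)
  intro i hi
  have h1 := countRot q m j (i+1) hq3 hm hj (by omega) (by omega)
  have h2 := countGe q m (i+1) hq3 hm (by omega) (by omega)
  have e1 : ((Finset.Icc 1 (q-1)).filter (fun t => i < (ex q m t + j) % m))
      = ((Finset.Icc 1 (q-1)).filter (fun t => i+1 ≤ (ex q m t + j) % m)) := rfl
  have e2 : ((Finset.Icc 1 (q-1)).filter (fun t => i < ex q m t))
      = ((Finset.Icc 1 (q-1)).filter (fun t => i+1 ≤ ex q m t)) := rfl
  rw [e1, e2, h2]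
  exact h1

theorem stmt_15 (q m : ℕ) (hq : IsPrimePow q) (hq3 : 3 ≤ q) (hm : 4 ≤ m) :
    ∀ j : ℕ,
      (q ^ m - (∑ t ∈ Finset.Icc 1 (q - 1), q ^ ((m * t + q - 2) / (q - 1) - 1)) - 1) / (q - 1) ≤
        ((q ^ m - (∑ t ∈ Finset.Icc 1 (q - 1), q ^ ((m * t + q - 2) / (q - 1) - 1)) - 1) / (q - 1) *
            q ^ j) %
          ((q ^ m - 1) / (q - 1)) := by
  intro j
  have hm0 : 0 < m := by omega
  have hq1 : 1 ≤ q := by omega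
  have hpow1 : 1 ≤ q ^ (m-1) := Nat.one_le_pow _ _ (by omega)
  have hqm : q ^ m = q^(m-1) * q := by rw [← pow_succ]; congr 1; omega
  set S : ℕ := ∑ t ∈ Finset.Icc 1 (q - 1), q ^ ((m * t + q - 2) / (q - 1) - 1) with hSdef
  set j' := j % m with hj'
  set T : ℕ := ∑ t ∈ Finset.Icc 1 (q-1), q^((ex q m t + j') % m) with hTdef
  set P := q ^ m - 1 with hPdef
  have hSex : S = ∑ t ∈ Finset.Icc 1 (q-1), q^(ex q m t) := rfl
  have hsub : q ^ m - S - 1 = P - S := Nat.sub_right_comm _ _ _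
  rw [hsub]
  -- divisibility facts
  have hdvdP : (q-1) ∣ P := by simpa using Nat.sub_dvd_pow_sub_pow q 1 m
  have hq_mod : q ≡ 1 [MOD q-1] := ((Nat.modEq_iff_dvd' hq1).mpr dvd_rfl).symm
  have hdvdS : (q-1) ∣ S := by
    have h1 : S ≡ ∑ _t ∈ Finset.Icc 1 (q-1), 1 [MOD q-1] := by
      rw [hSex]
      apply sum_modEq
      intro t _
      have := hq_mod.pow (ex q m t)
      rwa [one_pow] at this
    have h2 : ∑ _t ∈ Finset.Icc 1 (q-1), 1 = q - 1 := by
      rw [Finset.sum_const, smul_eq_mul, mul_one, Nat.card_Icc, Nat.add_sub_cancel]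
    rw [h2] at h1
    have h3 : S ≡ 0 [MOD q-1] := h1.trans (Nat.modEq_zero_iff_dvd.mpr dvd_rfl)
    exact Nat.modEq_zero_iff_dvd.mp h3
  -- size bounds
  have hbound : ∀ (f : ℕ → ℕ), (∀ t ∈ Finset.Icc 1 (q-1), f t < m) →
      ∑ t ∈ Finset.Icc 1 (q-1), q^(f t) ≤ q^m - q^(m-1) := by
    intro f hf
    have h1 : ∑ t ∈ Finset.Icc 1 (q-1), q^(f t) ≤ (Finset.Icc 1 (q-1)).card • q^(m-1) := by
      apply Finset.sum_le_card_nsmul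
      intro t ht
      exact Nat.pow_le_pow_right hq1 (by have := hf t ht; omega)
    rw [Nat.card_Icc, Nat.add_sub_cancel, smul_eq_mul] at h1
    calc ∑ t ∈ Finset.Icc 1 (q-1), q^(f t) ≤ (q-1) * q^(m-1) := h1
      _ = q^(m-1) * q - q^(m-1) := by rw [Nat.sub_mul, one_mul, mul_comm]
      _ = q^m - q^(m-1) := by rw [← hqm]
  have hSle : S ≤ q^m - q^(m-1) := by
    rw [hSex]; exact hbound _ (ex_lt q m hq3 hm)
  have hTle : T ≤ q^m - q^(m-1) := hbound _ (fun t _ => Nat.mod_lt _ hm0)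
  have hSP : S ≤ P := by omega
  have hTP : T ≤ P := by omega
  have hT1 : 1 ≤ T := by
    rw [hTdef]
    apply Finset.sum_pos (fun t _ => Nat.pow_pos (by omega))
    exact ⟨1, by simp [Finset.mem_Icc]; omega⟩
  have hP1 : 1 ≤ P := by omega
  -- T ≤ S
  have hTS : T ≤ S := by
    rw [hSex, hTdef]
    exact T_le_S q m j' hq3 hm (Nat.mod_lt _ hm0)
  -- S * q^j ≡ T [MOD P]
  have hSqj : S * q^j ≡ T [MOD P] := by
    have h1 : S * q^j = ∑ t ∈ Finset.Icc 1 (q-1), q^(ex q m t + j) := by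
      rw [hSex, Finset.sum_mul]
      exact Finset.sum_congr rfl (fun t _ => (pow_add q _ _).symm)
    rw [h1, hTdef]
    apply sum_modEq
    intro t _
    have h2 := pow_mod_cycle q m (ex q m t + j) hq1 (by omega)
    have h3 : (ex q m t + j) % m = (ex q m t + j') % m := by
      rw [hj']
      conv_lhs => rw [Nat.add_mod]
      conv_rhs => rw [Nat.add_mod, Nat.mod_mod_of_dvd j (dvd_refl m)]
    rw [h3] at h2
    exact h2
  -- key computation
  have hkn : (q-1) * (P/(q-1)) = P := Nat.mul_div_cancel' hdvdP
  have hθ : (q-1) * ((P - S)/(q-1)) = P - S := Nat.mul_div_cancel' (Nat.dvd_sub hdvdP hdvdS)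
  have hXeq : (P - S) * q^j % P = P - T := by
    have hPq : (P - S)*q^j + S*q^j = P*q^j := by rw [← Nat.add_mul, Nat.sub_add_cancel hSP]
    have h0 : (P - S)*q^j + S*q^j ≡ 0 [MOD P] := by
      rw [hPq]
      exact Nat.modEq_zero_iff_dvd.mpr (Dvd.intro _ rfl)
    have h2 : (P - T) + S*q^j ≡ 0 [MOD P] := by
      calc (P-T) + S*q^j ≡ (P-T) + T [MOD P] := Nat.ModEq.add_left _ hSqj
        _ = P := Nat.sub_add_cancel hTP
        _ ≡ 0 [MOD P] := Nat.modEq_zero_iff_dvd.mpr dvd_rfl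
    have h4 : (P - S)*q^j ≡ P - T [MOD P] :=
      Nat.ModEq.add_right_cancel' (S*q^j) (h0.trans h2.symm)
    have h5 : P - T < P := by omega
    calc (P - S) * q^j % P = (P - T) % P := h4
      _ = P - T := Nat.mod_eq_of_lt h5
  have hmain : (q-1) * ((P - S)/(q-1) * q^j % (P/(q-1))) = P - T := by
    rw [← Nat.mul_mod_mul_left, hkn, ← mul_assoc, hθ, hXeq]
  apply Nat.le_of_mul_le_mul_left _ (show 0 < q - 1 by omega)
  rw [hmain, hθ]
  omega
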